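/- Let n and S be positive integers, let H be an n×S complex matrix with HᴴH invertible, let h ∈ ℂⁿ, let P₀ > 0, let U := H(HᴴH)⁻¹Hᴴ, and assume (I − U)h ≠ 0. Then P₀ · ‖(I − U)h‖² is the greatest element of the set { |wᴴh|² : w ∈ ℂⁿ, wᴴw ≤ P₀, wᴴH = 0 }, and this maximum is attained by w* := (√P₀ / ‖(I − U)h‖) · (I − U)h. -/

import Mathlib

open Matrix

private lemma cs_aux {n : ℕ} (w v : Fin n → ℂ) :
    ‖star w ⬝ᵥ v‖ ^ 2 ≤ (∑ i, ‖w i‖ ^ 2) * (∑ i, ‖v i‖ ^ 2) := by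
  let x : EuclideanSpace ℂ (Fin n) := (WithLp.equiv 2 (Fin n → ℂ)).symm w
  let y : EuclideanSpace ℂ (Fin n) := (WithLp.equiv 2 (Fin n → ℂ)).symm v
  have hinner : (inner ℂ x y : ℂ) = star w ⬝ᵥ v := by
    simp [x, y, PiLp.inner_apply, dotProduct, RCLike.inner_apply, mul_comm]
  have hx : ‖x‖ ^ 2 = ∑ i, ‖w i‖ ^ 2 := by
    rw [EuclideanSpace.norm_eq,
      Real.sq_sqrt (Finset.sum_nonneg fun i _ => sq_nonneg _)]
    rfl
  have hy : ‖y‖ ^ 2 = ∑ i, ‖v i‖ ^ 2 := by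
    rw [EuclideanSpace.norm_eq,
      Real.sq_sqrt (Finset.sum_nonneg fun i _ => sq_nonneg _)]
    rfl
  calc ‖star w ⬝ᵥ v‖ ^ 2 = ‖(inner ℂ x y : ℂ)‖ ^ 2 := by rw [hinner]
    _ ≤ (‖x‖ * ‖y‖) ^ 2 :=
        pow_le_pow_left₀ (norm_nonneg _) (norm_inner_le_norm x y) 2
    _ = (∑ i, ‖w i‖ ^ 2) * (∑ i, ‖v i‖ ^ 2) := by rw [mul_pow, hx, hy]

theorem nullSteering_isGreatest (n S : ℕ) (hn : 0 < n) (hS : 0 < S)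
    (H : Matrix (Fin n) (Fin S) ℂ) [Invertible (Hᴴ * H)] (h : Fin n → ℂ)
    (P₀ : ℝ) (hP₀ : 0 < P₀)
    (U : Matrix (Fin n) (Fin n) ℂ) (hU : U = H * (Hᴴ * H)⁻¹ * Hᴴ)
    (hne : (1 - U) *ᵥ h ≠ 0)
    (wstar : Fin n → ℂ)
    (hwstar : wstar =
      ((Real.sqrt P₀ / Real.sqrt (∑ i, ‖((1 - U) *ᵥ h) i‖ ^ 2) : ℝ) : ℂ) •
        ((1 - U) *ᵥ h)) :
    IsGreatest
      {x : ℝ | ∃ w : Fin n → ℂ, (∑ i, ‖w i‖ ^ 2) ≤ P₀ ∧ star w ᵥ* H = 0 ∧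
        x = ‖star w ⬝ᵥ h‖ ^ 2}
      (P₀ * ∑ i, ‖((1 - U) *ᵥ h) i‖ ^ 2) ∧
    ‖star wstar ⬝ᵥ h‖ ^ 2 = P₀ * ∑ i, ‖((1 - U) *ᵥ h) i‖ ^ 2 := by
  set g : Fin n → ℂ := (1 - U) *ᵥ h with hg
  set K : ℝ := ∑ i, ‖g i‖ ^ 2 with hK
  have hKnonneg : 0 ≤ K := Finset.sum_nonneg fun i _ => by positivity
  have hKpos : 0 < K := by
    rcases hKnonneg.lt_or_eq with h' | h'
    · exact h'
    · exfalso
      apply hne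
      funext i
      have := (Finset.sum_eq_zero_iff_of_nonneg
        (fun i _ => by positivity : ∀ i ∈ Finset.univ, (0:ℝ) ≤ ‖g i‖ ^ 2)).mp h'.symm
        i (Finset.mem_univ i)
      have : ‖g i‖ = 0 := by nlinarith [norm_nonneg (g i)]
      simpa using this
  -- basic matrix algebra
  have hUH : U * H = H := by
    rw [hU, Matrix.mul_assoc, Matrix.mul_assoc, ← Matrix.mul_assoc (Hᴴ * H)⁻¹ Hᴴ H,
      Matrix.mul_assoc (Hᴴ * H)⁻¹ Hᴴ H, Matrix.inv_mul_of_invertible, Matrix.mul_one]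
  have hUherm : Uᴴ = U := by
    rw [hU]
    simp only [Matrix.conjTranspose_mul, Matrix.conjTranspose_nonsing_inv,
      Matrix.conjTranspose_conjTranspose, Matrix.conjTranspose_mul,
      Matrix.conjTranspose_conjTranspose]
    rw [Matrix.mul_assoc]
  -- for any w orthogonal to columns of H, wᴴ U = 0
  have hwU : ∀ w : Fin n → ℂ, star w ᵥ* H = 0 → star w ᵥ* U = 0 := by
    intro w hw
    rw [hU, Matrix.mul_assoc, ← Matrix.vecMul_vecMul, hw, Matrix.zero_vecMul]
  have key : ∀ w : Fin n → ℂ, star w ᵥ* H = 0 → star w ⬝ᵥ h = star w ⬝ᵥ g := by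
    intro w hw
    have : g = h - U *ᵥ h := by rw [hg, Matrix.sub_mulVec, Matrix.one_mulVec]
    rw [this, dotProduct_sub, Matrix.dotProduct_mulVec, hwU w hw,
      zero_dotProduct, sub_zero]
  have hgH : star g ᵥ* H = 0 := by
    rw [hg, Matrix.star_mulVec, Matrix.conjTranspose_sub, Matrix.conjTranspose_one,
      hUherm, Matrix.vecMul_vecMul, Matrix.sub_mul, Matrix.one_mul, hUH,
      sub_self, Matrix.vecMul_zero]
  have hgg : star g ⬝ᵥ g = (K : ℂ) := by
    rw [hK]
    push_cast
    simp only [dotProduct, Pi.star_apply]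
    refine Finset.sum_congr rfl fun i _ => ?_
    rw [Complex.star_def, mul_comm, Complex.mul_conj]
    norm_cast
    simp [Complex.normSq_eq_norm_sq]
  have hgh : star g ⬝ᵥ h = (K : ℂ) := by rw [key g hgH, hgg]
  -- the value attained by wstar
  set c : ℝ := Real.sqrt P₀ / Real.sqrt K with hc
  have hcpos : 0 < c := div_pos (Real.sqrt_pos.mpr hP₀) (Real.sqrt_pos.mpr hKpos)
  have hc2 : c ^ 2 = P₀ / K := by
    rw [hc, div_pow, Real.sq_sqrt hP₀.le, Real.sq_sqrt hKpos.le]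
  have hwstar_dot : star wstar ⬝ᵥ h = ((c * K : ℝ) : ℂ) := by
    rw [hwstar, star_smul, smul_dotProduct, hgh]
    simp [Complex.star_def, Complex.conj_ofReal, smul_eq_mul]
  have hattain : ‖star wstar ⬝ᵥ h‖ ^ 2 = P₀ * K := by
    rw [hwstar_dot]
    rw [Complex.norm_real, Real.norm_eq_abs, sq_abs]
    rw [mul_pow, hc2]
    field_simp
  refine ⟨⟨⟨wstar, ?_, ?_, hattain.symm⟩, ?_⟩, hattain⟩
  · -- power constraint
    have : (∑ i, ‖wstar i‖ ^ 2) = c ^ 2 * K := by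
      rw [hwstar, Finset.mul_sum]
      refine Finset.sum_congr rfl fun i _ => ?_
      rw [Pi.smul_apply, norm_smul, mul_pow, Complex.norm_real,
        Real.norm_eq_abs, sq_abs]
    rw [this, hc2]
    rw [div_mul_cancel₀ _ hKpos.ne']
  · -- nulling constraint
    rw [hwstar, star_smul, Matrix.smul_vecMul, hgH, smul_zero]
  · -- upper bound
    rintro x ⟨w, hw1, hw2, rfl⟩
    calc ‖star w ⬝ᵥ h‖ ^ 2 = ‖star w ⬝ᵥ g‖ ^ 2 := by
          rw [key w hw2]
      _ ≤ (∑ i, ‖w i‖ ^ 2) * K := cs_aux w g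
      _ ≤ P₀ * K := by
          apply mul_le_mul_of_nonneg_right hw1 hKnonneg
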